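/- Let R = k[x, y, z]/(x^10 + y^10 + z^10) with k a field of characteristic p ∉ {0, 2, 5}. Let J = (x^5, y^7, z^8) and u = x y^3 z^6, I = J + (u). Then (J : I) = (x^4, y^4, z^2) and z^2·u ∉ J·(J : I). -/

import Mathlib

open MvPolynomial

/-- If every generator of `G` is a monomial whose exponent is not `≤ d`, then every element of
the ideal span of `G` has zero coefficient at every `d' ≤ d`. -/
lemma coeff_span_monomials {k : Type*} [CommRing k] (G : Set (MvPolynomial (Fin 3) k))
    (d : Fin 3 →₀ ℕ)
    (hG : ∀ g ∈ G, ∃ e c, g = monomial e c ∧ ¬ e ≤ d) :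
    ∀ w ∈ Ideal.span G, ∀ d' ≤ d, MvPolynomial.coeff d' w = 0 := by
  intro w hw
  refine Submodule.span_induction ?_ ?_ ?_ ?_ hw
  · intro g hg d' hd'
    obtain ⟨e, c, rfl, he⟩ := hG g hg
    rw [coeff_monomial, if_neg]
    rintro rfl
    exact he hd'
  · intro d' _; simp
  · intro a b _ _ ha hb d' hd'
    rw [coeff_add, ha d' hd', hb d' hd', add_zero]
  · intro a w _ hwih d' hd'
    rw [smul_eq_mul, coeff_mul]
    apply Finset.sum_eq_zero
    rintro ⟨d1, d2⟩ hmem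
    rw [Finset.HasAntidiagonal.mem_antidiagonal] at hmem
    have h2 : d2 ≤ d := le_trans (hmem ▸ le_add_self) hd'
    rw [hwih d2 h2, mul_zero]

lemma not_le_of_coord {e d : Fin 3 →₀ ℕ} (i : Fin 3) (h : d i < e i) : ¬ e ≤ d :=
  fun hle => absurd (Finsupp.le_def.mp hle i) (not_le.mpr h)

lemma mono3 {k : Type*} [CommRing k] (a b c : ℕ) :
    (X 0 : MvPolynomial (Fin 3) k) ^ a * X 1 ^ b * X 2 ^ c =
      monomial (Finsupp.single 0 a + Finsupp.single 1 b + Finsupp.single 2 c) 1 := by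
  rw [X_pow_eq_monomial, X_pow_eq_monomial, X_pow_eq_monomial, monomial_mul, monomial_mul,
    one_mul, one_mul]

open MvPolynomial in
/-- in `R = k[x,y,z]/(x^10+y^10+z^10)`, char `k = p ∉ {0,2,5}`, with
`J = (x^5, y^7, z^8)`, `u = x y³ z⁶`, `I = J + (u)`: `(J : I) = (x⁴, y⁴, z²)` and
`z²·u ∉ J·(J : I)`. -/
theorem stmt11 {k : Type*} [Field k] (p : ℕ) (hp : p.Prime) [CharP k p]
    (hp2 : p ≠ 2) (hp5 : p ≠ 5)
    {R : Type*} [CommRing R] (φ : MvPolynomial (Fin 3) k →+* R)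
    (hsurj : Function.Surjective φ)
    (hker : RingHom.ker φ =
      Ideal.span {(X 0 : MvPolynomial (Fin 3) k) ^ 10 + X 1 ^ 10 + X 2 ^ 10})
    (J I : Ideal R) (u : R)
    (hJ : J = Ideal.span {φ (X 0) ^ 5, φ (X 1) ^ 7, φ (X 2) ^ 8})
    (hu : u = φ (X 0) * φ (X 1) ^ 3 * φ (X 2) ^ 6)
    (hI : I = J ⊔ Ideal.span {u}) :
    J.colon I = Ideal.span {φ (X 0) ^ 4, φ (X 1) ^ 4, φ (X 2) ^ 2} ∧
      φ (X 2) ^ 2 * u ∉ J * J.colon I := by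
  classical
  set fp : MvPolynomial (Fin 3) k := X 0 ^ 10 + X 1 ^ 10 + X 2 ^ 10 with hfp
  set J' : Ideal (MvPolynomial (Fin 3) k) := Ideal.span {X 0 ^ 5, X 1 ^ 7, X 2 ^ 8} with hJ'
  set K' : Ideal (MvPolynomial (Fin 3) k) := Ideal.span {X 0 ^ 4, X 1 ^ 4, X 2 ^ 2} with hK'
  have key : ∀ (N : Ideal (MvPolynomial (Fin 3) k)) (w : MvPolynomial (Fin 3) k),
      φ w ∈ Ideal.map φ N ↔ w ∈ N ⊔ Ideal.span {fp} := by
    intro N w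
    rw [← hker, RingHom.ker_eq_comap_bot, ← Ideal.comap_map_of_surjective φ hsurj N,
      Ideal.mem_comap]
  have hJmap : J = Ideal.map φ J' := by
    rw [hJ, hJ', Ideal.map_span]
    congr 1
    simp [Set.image_insert_eq, map_pow]
  have hKmap : Ideal.span {φ (X 0) ^ 4, φ (X 1) ^ 4, φ (X 2) ^ 2} = Ideal.map φ K' := by
    rw [hK', Ideal.map_span]
    congr 1
    simp [Set.image_insert_eq, map_pow]
  have hfJ' : fp ∈ J' := by
    have h1 : (X 0 : MvPolynomial (Fin 3) k) ^ 5 ∈ J' := Ideal.subset_span (by simp)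
    have h2 : (X 1 : MvPolynomial (Fin 3) k) ^ 7 ∈ J' := Ideal.subset_span (by simp)
    have h3 : (X 2 : MvPolynomial (Fin 3) k) ^ 8 ∈ J' := Ideal.subset_span (by simp)
    have he : fp = X 0 ^ 5 * X 0 ^ 5 + X 1 ^ 3 * X 1 ^ 7 + X 2 ^ 2 * X 2 ^ 8 := by
      rw [hfp]; ring
    rw [he]
    exact add_mem (add_mem (Ideal.mul_mem_left _ _ h1) (Ideal.mul_mem_left _ _ h2))
      (Ideal.mul_mem_left _ _ h3)
  have colon_of : ∀ g : R, g * u ∈ J → g ∈ J.colon I := by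
    intro g hg
    rw [Submodule.mem_colon]
    intro i hi
    rw [hI] at hi
    obtain ⟨j, hj, v, hv, rfl⟩ := Submodule.mem_sup.mp hi
    obtain ⟨a, rfl⟩ := Ideal.mem_span_singleton'.mp hv
    have he : g • (j + a * u) = g * j + a * (g * u) := by rw [smul_eq_mul]; ring
    rw [he]
    exact J.add_mem (J.mul_mem_left _ hj) (J.mul_mem_left _ hg)
  -- the colon ideal equality
  have part1 : J.colon I = Ideal.span {φ (X 0) ^ 4, φ (X 1) ^ 4, φ (X 2) ^ 2} := by
    apply le_antisymm
    · intro r hr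
      obtain ⟨P, rfl⟩ := hsurj r
      have humem : u ∈ I := by rw [hI]; exact Ideal.mem_sup_right (Ideal.subset_span rfl)
      have h1 : φ P * u ∈ J := by
        have := Submodule.mem_colon.mp hr u humem
        rwa [smul_eq_mul] at this
      set eu : Fin 3 →₀ ℕ := Finsupp.single 0 1 + Finsupp.single 1 3 + Finsupp.single 2 6
        with heu
      have h2 : P * monomial eu 1 ∈ J' := by
        have hm : φ (P * monomial eu 1) ∈ Ideal.map φ J' := by
          have h3 : φ (P * monomial eu 1) = φ P * u := by
            rw [heu, ← mono3, hu]
            simp [map_mul, map_pow, pow_one]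
          rw [hJmap] at h1
          rw [h3]
          exact h1
        rw [key] at hm
        have hJf : J' ⊔ Ideal.span {fp} = J' :=
          sup_eq_left.mpr (by rw [Ideal.span_le, Set.singleton_subset_iff]; exact hfJ')
        rwa [hJf] at hm
      have hPK : P ∈ K' := by
        rw [P.as_sum]
        apply Ideal.sum_mem
        intro v _
        by_cases h0 : 4 ≤ v 0
        · have he : (monomial v) (coeff v P) =
              monomial (v - Finsupp.single 0 4) (coeff v P) * X 0 ^ 4 := by
            rw [X_pow_eq_monomial, monomial_mul, mul_one,
              tsub_add_cancel_of_le (Finsupp.single_le_iff.mpr h0)]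
          rw [he]
          exact Ideal.mul_mem_left _ _ (Ideal.subset_span (by simp))
        by_cases h1' : 4 ≤ v 1
        · have he : (monomial v) (coeff v P) =
              monomial (v - Finsupp.single 1 4) (coeff v P) * X 1 ^ 4 := by
            rw [X_pow_eq_monomial, monomial_mul, mul_one,
              tsub_add_cancel_of_le (Finsupp.single_le_iff.mpr h1')]
          rw [he]
          exact Ideal.mul_mem_left _ _ (Ideal.subset_span (by simp))
        by_cases h2' : 2 ≤ v 2
        · have he : (monomial v) (coeff v P) =
              monomial (v - Finsupp.single 2 2) (coeff v P) * X 2 ^ 2 := by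
            rw [X_pow_eq_monomial, monomial_mul, mul_one,
              tsub_add_cancel_of_le (Finsupp.single_le_iff.mpr h2')]
          rw [he]
          exact Ideal.mul_mem_left _ _ (Ideal.subset_span (by simp))
        · -- all exponents small: coefficient vanishes
          have hG : ∀ g ∈ ({X 0 ^ 5, X 1 ^ 7, X 2 ^ 8} : Set (MvPolynomial (Fin 3) k)),
              ∃ e c, g = monomial e c ∧ ¬ e ≤ v + eu := by
            rintro g hg
            simp only [Set.mem_insert_iff, Set.mem_singleton_iff] at hg
            rcases hg with rfl | rfl | rfl
            · exact ⟨_, _, X_pow_eq_monomial, not_le_of_coord 0 (by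
                simp [heu, Finsupp.add_apply, Finsupp.single_apply]; omega)⟩
            · exact ⟨_, _, X_pow_eq_monomial, not_le_of_coord 1 (by
                simp [heu, Finsupp.add_apply, Finsupp.single_apply]; omega)⟩
            · exact ⟨_, _, X_pow_eq_monomial, not_le_of_coord 2 (by
                simp [heu, Finsupp.add_apply, Finsupp.single_apply]; omega)⟩
          have hc := coeff_span_monomials _ _ hG _ (hJ' ▸ h2) _ le_rfl
          rw [coeff_mul_monomial, mul_one] at hc
          rw [hc]
          simp
      rw [hKmap]
      exact Ideal.mem_map_of_mem φ hPK
    · rw [Ideal.span_le]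
      intro g hg
      simp only [Set.mem_insert_iff, Set.mem_singleton_iff] at hg
      have hx5 : φ (X 0) ^ 5 ∈ J := by rw [hJ]; exact Ideal.subset_span (by simp)
      have hy7 : φ (X 1) ^ 7 ∈ J := by rw [hJ]; exact Ideal.subset_span (by simp)
      have hz8 : φ (X 2) ^ 8 ∈ J := by rw [hJ]; exact Ideal.subset_span (by simp)
      have hmem : g ∈ J.colon I := by
        rcases hg with rfl | rfl | rfl
        · apply colon_of
          have he : φ (X 0) ^ 4 * u = φ (X 1) ^ 3 * φ (X 2) ^ 6 * φ (X 0) ^ 5 := by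
            rw [hu]; ring
          rw [he]; exact J.mul_mem_left _ hx5
        · apply colon_of
          have he : φ (X 1) ^ 4 * u = φ (X 0) * φ (X 2) ^ 6 * φ (X 1) ^ 7 := by
            rw [hu]; ring
          rw [he]; exact J.mul_mem_left _ hy7
        · apply colon_of
          have he : φ (X 2) ^ 2 * u = φ (X 0) * φ (X 1) ^ 3 * φ (X 2) ^ 8 := by
            rw [hu]; ring
          rw [he]; exact J.mul_mem_left _ hz8
      exact hmem
  refine ⟨part1, ?_⟩
  intro hmem
  have hw : φ (X 0 * X 1 ^ 3 * X 2 ^ 8) ∈ Ideal.map φ (J' * K') := by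
    rw [Ideal.map_mul, ← hJmap, ← hKmap]
    have he : φ (X 0 * X 1 ^ 3 * X 2 ^ 8) = φ (X 2) ^ 2 * u := by
      rw [hu]; simp [map_mul, map_pow]; ring
    rw [he]
    rwa [part1] at hmem
  rw [key] at hw
  set M2 : Ideal (MvPolynomial (Fin 3) k) := Ideal.span
    ({X 0 ^ 5 * X 0 ^ 4, X 0 ^ 5 * X 1 ^ 4, X 0 ^ 5 * X 2 ^ 2,
      X 1 ^ 7 * X 0 ^ 4, X 1 ^ 7 * X 1 ^ 4, X 1 ^ 7 * X 2 ^ 2,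
      X 2 ^ 8 * X 0 ^ 4, X 2 ^ 8 * X 1 ^ 4, X 2 ^ 8 * X 2 ^ 2,
      X 1 ^ 10} : Set (MvPolynomial (Fin 3) k)) with hM2
  have hle : J' * K' ⊔ Ideal.span {fp} ≤ M2 := by
    apply sup_le
    · rw [hJ', hK', Ideal.span_mul_span', Ideal.span_le]
      rintro g ⟨a, ha, b, hb, rfl⟩
      apply Ideal.subset_span
      simp only [Set.mem_insert_iff, Set.mem_singleton_iff] at ha hb
      rcases ha with rfl | rfl | rfl
      · rcases hb with rfl | rfl | rfl
        · exact Set.mem_insert _ _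
        · exact Set.mem_insert_of_mem _ (Set.mem_insert _ _)
        · exact Set.mem_insert_of_mem _ (Set.mem_insert_of_mem _ (Set.mem_insert _ _))
      · rcases hb with rfl | rfl | rfl
        · exact Set.mem_insert_of_mem _ (Set.mem_insert_of_mem _ (Set.mem_insert_of_mem _
            (Set.mem_insert _ _)))
        · exact Set.mem_insert_of_mem _ (Set.mem_insert_of_mem _ (Set.mem_insert_of_mem _
            (Set.mem_insert_of_mem _ (Set.mem_insert _ _))))
        · exact Set.mem_insert_of_mem _ (Set.mem_insert_of_mem _ (Set.mem_insert_of_mem _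
            (Set.mem_insert_of_mem _ (Set.mem_insert_of_mem _ (Set.mem_insert _ _)))))
      · rcases hb with rfl | rfl | rfl
        · exact Set.mem_insert_of_mem _ (Set.mem_insert_of_mem _ (Set.mem_insert_of_mem _
            (Set.mem_insert_of_mem _ (Set.mem_insert_of_mem _ (Set.mem_insert_of_mem _
            (Set.mem_insert _ _))))))
        · exact Set.mem_insert_of_mem _ (Set.mem_insert_of_mem _ (Set.mem_insert_of_mem _
            (Set.mem_insert_of_mem _ (Set.mem_insert_of_mem _ (Set.mem_insert_of_mem _
            (Set.mem_insert_of_mem _ (Set.mem_insert _ _)))))))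
        · exact Set.mem_insert_of_mem _ (Set.mem_insert_of_mem _ (Set.mem_insert_of_mem _
            (Set.mem_insert_of_mem _ (Set.mem_insert_of_mem _ (Set.mem_insert_of_mem _
            (Set.mem_insert_of_mem _ (Set.mem_insert_of_mem _ (Set.mem_insert _ _))))))))
    · rw [Ideal.span_le, Set.singleton_subset_iff]
      have e1 : (X 0 : MvPolynomial (Fin 3) k) ^ 5 * X 0 ^ 4 ∈ M2 :=
        Ideal.subset_span (Set.mem_insert _ _)
      have e9 : (X 2 : MvPolynomial (Fin 3) k) ^ 8 * X 2 ^ 2 ∈ M2 :=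
        Ideal.subset_span (Set.mem_insert_of_mem _ (Set.mem_insert_of_mem _
          (Set.mem_insert_of_mem _ (Set.mem_insert_of_mem _ (Set.mem_insert_of_mem _
          (Set.mem_insert_of_mem _ (Set.mem_insert_of_mem _ (Set.mem_insert_of_mem _
          (Set.mem_insert _ _)))))))))
      have e10 : (X 1 : MvPolynomial (Fin 3) k) ^ 10 ∈ M2 :=
        Ideal.subset_span (Set.mem_insert_of_mem _ (Set.mem_insert_of_mem _
          (Set.mem_insert_of_mem _ (Set.mem_insert_of_mem _ (Set.mem_insert_of_mem _
          (Set.mem_insert_of_mem _ (Set.mem_insert_of_mem _ (Set.mem_insert_of_mem _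
          (Set.mem_insert_of_mem _ rfl)))))))))
      have he : fp = X 0 * (X 0 ^ 5 * X 0 ^ 4) + X 1 ^ 10 + X 2 ^ 8 * X 2 ^ 2 := by
        rw [hfp]; ring
      rw [he]
      exact add_mem (add_mem (Ideal.mul_mem_left _ _ e1) e10) e9
  have hw2 := hle hw
  set d2 : Fin 3 →₀ ℕ := Finsupp.single 0 1 + Finsupp.single 1 3 + Finsupp.single 2 8 with hd2
  have hG2 : ∀ g ∈ ({X 0 ^ 5 * X 0 ^ 4, X 0 ^ 5 * X 1 ^ 4, X 0 ^ 5 * X 2 ^ 2,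
      X 1 ^ 7 * X 0 ^ 4, X 1 ^ 7 * X 1 ^ 4, X 1 ^ 7 * X 2 ^ 2,
      X 2 ^ 8 * X 0 ^ 4, X 2 ^ 8 * X 1 ^ 4, X 2 ^ 8 * X 2 ^ 2,
      X 1 ^ 10} : Set (MvPolynomial (Fin 3) k)), ∃ e c, g = monomial e c ∧ ¬ e ≤ d2 := by
    intro g hg
    simp only [Set.mem_insert_iff, Set.mem_singleton_iff] at hg
    rcases hg with rfl | rfl | rfl | rfl | rfl | rfl | rfl | rfl | rfl | rfl
    · exact ⟨_, _, by rw [← pow_add, X_pow_eq_monomial], not_le_of_coord 0 (by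
        simp [hd2, Finsupp.add_apply, Finsupp.single_apply])⟩
    · exact ⟨_, _, by rw [X_pow_eq_monomial, X_pow_eq_monomial, monomial_mul, one_mul],
        not_le_of_coord 0 (by simp [hd2, Finsupp.add_apply, Finsupp.single_apply])⟩
    · exact ⟨_, _, by rw [X_pow_eq_monomial, X_pow_eq_monomial, monomial_mul, one_mul],
        not_le_of_coord 0 (by simp [hd2, Finsupp.add_apply, Finsupp.single_apply])⟩
    · exact ⟨_, _, by rw [X_pow_eq_monomial, X_pow_eq_monomial, monomial_mul, one_mul],
        not_le_of_coord 0 (by simp [hd2, Finsupp.add_apply, Finsupp.single_apply])⟩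
    · exact ⟨_, _, by rw [← pow_add, X_pow_eq_monomial], not_le_of_coord 1 (by
        simp [hd2, Finsupp.add_apply, Finsupp.single_apply])⟩
    · exact ⟨_, _, by rw [X_pow_eq_monomial, X_pow_eq_monomial, monomial_mul, one_mul],
        not_le_of_coord 1 (by simp [hd2, Finsupp.add_apply, Finsupp.single_apply])⟩
    · exact ⟨_, _, by rw [X_pow_eq_monomial, X_pow_eq_monomial, monomial_mul, one_mul],
        not_le_of_coord 0 (by simp [hd2, Finsupp.add_apply, Finsupp.single_apply])⟩
    · exact ⟨_, _, by rw [X_pow_eq_monomial, X_pow_eq_monomial, monomial_mul, one_mul],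
        not_le_of_coord 1 (by simp [hd2, Finsupp.add_apply, Finsupp.single_apply])⟩
    · exact ⟨_, _, by rw [← pow_add, X_pow_eq_monomial], not_le_of_coord 2 (by
        simp [hd2, Finsupp.add_apply, Finsupp.single_apply])⟩
    · exact ⟨_, _, X_pow_eq_monomial, not_le_of_coord 1 (by
        simp [hd2, Finsupp.add_apply, Finsupp.single_apply])⟩
  have hzero := coeff_span_monomials _ d2 hG2 _ (hM2 ▸ hw2) d2 le_rfl
  have hone : (X 0 : MvPolynomial (Fin 3) k) * X 1 ^ 3 * X 2 ^ 8 = monomial d2 1 := by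
    rw [hd2, ← mono3, pow_one]
  rw [hone, coeff_monomial, if_pos rfl] at hzero
  exact one_ne_zero hzero
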